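/- For every a in A and x in V, if xa = xa*, then Ω(xa) ≤ ‖a + a*‖_A Ω(x). -/

import Mathlib

/-!
Setting: `A` is a C*-algebra and `V` is a Hilbert C*-module over `A`.
`WithCStarModule Aᵐᵒᵖ (Aᵐᵒᵖ × V)` is the Hilbert `A`-module `A ⊕ V`, with inner product
`⟪(a, y), (b, z)⟫ = a * b + ⟪y, z⟫` and norm `‖(a, y)‖ = ‖a * a + ⟪y, y⟫‖ ^ (1/2)`
(both provided by Mathlib).  For `x : V` and `lam : ℂ` with `|lam| = 1`, the operator
`M_{x,lam} : A ⊕ V → A ⊕ V`, `(a, y) ↦ (conj lam • ⟪x, y⟫, lam • (x <• a))` is encoded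
by a family `M` of continuous linear maps satisfying the predicate `IsM` below, and the
numerical radius is `numRadius M x = (1/2) * sup_{|lam| = 1} ‖M x lam‖`.
-/

open scoped RightActions InnerProductSpace

set_option linter.unusedSectionVars false

noncomputable section

variable {A V : Type*} [NonUnitalCStarAlgebra A] [PartialOrder A] [StarOrderedRing A]
  [NormedAddCommGroup V] [Module ℂ V] [SMul Aᵐᵒᵖ V] [CStarModule Aᵐᵒᵖ V] [CompleteSpace V]

/-- The element of the Hilbert `A`-module `A ⊕ V` with components `a : A` and `y : V`. -/
def pairElem (a : A) (y : V) : WithCStarModule Aᵐᵒᵖ (Aᵐᵒᵖ × V) :=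
  (WithCStarModule.equiv Aᵐᵒᵖ (Aᵐᵒᵖ × V)).symm (MulOpposite.op a, y)

/-- `IsM M` asserts that for every `x : V` and every unimodular `lam : ℂ`, the continuous
linear map `M x lam` is the operator `M_{x,lam} : (a, y) ↦ (conj lam • ⟪x, y⟫, lam • (x <• a))`
on `A ⊕ V`. -/
def IsM (M : V → ℂ → (WithCStarModule Aᵐᵒᵖ (Aᵐᵒᵖ × V) →L[ℂ] WithCStarModule Aᵐᵒᵖ (Aᵐᵒᵖ × V))) : Prop :=
  ∀ (x : V) (lam : ℂ), ‖lam‖ = 1 → ∀ (a : A) (y : V),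
    M x lam (pairElem a y) = pairElem ((starRingEnd ℂ) lam • MulOpposite.unop (inner Aᵐᵒᵖ x y)) (lam • (x <• a))

/-- The numerical radius `Ω(x) = (1/2) * sup_{|lam| = 1} ‖M_{x,lam}‖`. -/
def numRadius (M : V → ℂ → (WithCStarModule Aᵐᵒᵖ (Aᵐᵒᵖ × V) →L[ℂ] WithCStarModule Aᵐᵒᵖ (Aᵐᵒᵖ × V)))
    (x : V) : ℝ :=
  (1 / 2) * sSup ((fun lam : ℂ => ‖M x lam‖) '' {lam : ℂ | ‖lam‖ = 1})

-- helpers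
lemma myEqOfInner {u v : V} (huv : ∀ w : V, inner Aᵐᵒᵖ w u = inner Aᵐᵒᵖ w v) : u = v := by
  have h0 : inner Aᵐᵒᵖ (u - v) (u - v) = 0 := by
    rw [CStarModule.inner_sub_right, huv (u - v), sub_self]
  exact sub_eq_zero.mp (CStarModule.inner_self.mp h0)

lemma myOpSmulOpSmul (x : V) (b c : A) : (x <• b) <• c = x <• (b * c) :=
  myEqOfInner fun w => by
    rw [CStarModule.inner_op_smul_right, CStarModule.inner_op_smul_right,
      CStarModule.inner_op_smul_right, MulOpposite.op_mul, mul_assoc]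

lemma myOpSmulAdd (x : V) (b c : A) : x <• (b + c) = x <• b + x <• c :=
  myEqOfInner fun w => by
    rw [CStarModule.inner_op_smul_right, CStarModule.inner_add_right,
      CStarModule.inner_op_smul_right, CStarModule.inner_op_smul_right, MulOpposite.op_add, add_mul]

lemma myOpSmulZero (x : V) : x <• (0 : A) = 0 :=
  myEqOfInner fun w => by
    rw [CStarModule.inner_op_smul_right, MulOpposite.op_zero, zero_mul, CStarModule.inner_zero_right]

include A in
lemma myNormSmulV (z : ℂ) (w : V) : ‖z • w‖ = ‖z‖ * ‖w‖ := by
  rw [CStarModule.norm_eq_sqrt_norm_inner_self (A := Aᵐᵒᵖ) (x := z • w),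
    CStarModule.norm_eq_sqrt_norm_inner_self (A := Aᵐᵒᵖ) (x := w),
    CStarModule.inner_smul_left_complex, CStarModule.inner_smul_right_complex,
    smul_smul]
  have h1 : ‖(star z * z) • inner Aᵐᵒᵖ w w‖ = ‖z‖ ^ 2 * ‖inner Aᵐᵒᵖ w w‖ := by
    rw [norm_smul, norm_mul, norm_star, pow_two]
  rw [h1, Real.sqrt_mul (by positivity), Real.sqrt_sq (norm_nonneg z)]

lemma myNormOpSmulLe (x : V) (d : A) : ‖x <• d‖ ≤ ‖x‖ * ‖d‖ := by
  rcases eq_or_lt_of_le (norm_nonneg (x <• d)) with h0 | h0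
  · rw [← h0]; positivity
  · have h1 : ‖x <• d‖ ^ 2 ≤ ‖d‖ * (‖x‖ * ‖x <• d‖) := by
      rw [CStarModule.norm_sq_eq (A := Aᵐᵒᵖ), CStarModule.inner_op_smul_left]
      calc ‖inner Aᵐᵒᵖ x (x <• d) * star (MulOpposite.op d)‖ ≤ ‖inner Aᵐᵒᵖ x (x <• d)‖ * ‖star (MulOpposite.op d)‖ := norm_mul_le _ _
        _ = ‖d‖ * ‖inner Aᵐᵒᵖ x (x <• d)‖ := by rw [norm_star, MulOpposite.norm_op, mul_comm]
        _ ≤ ‖d‖ * (‖x‖ * ‖x <• d‖) := by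
            exact mul_le_mul_of_nonneg_left (CStarModule.norm_inner_le V) (norm_nonneg d)
    nlinarith [h1]

lemma myPairElemEta (ξ : WithCStarModule Aᵐᵒᵖ (Aᵐᵒᵖ × V)) : pairElem ξ.1.unop ξ.2 = ξ := rfl

lemma myPairElemSmul (z : ℂ) (u : A) (w : V) :
    pairElem (z • u) (z • w) = z • pairElem u w := rfl

lemma myNormFstLe (u : A) (w : V) : ‖u‖ ≤ ‖pairElem u w‖ :=
  le_trans (le_max_left _ _) (WithCStarModule.max_le_prod_norm (pairElem u w))

lemma myNormSndLe (u : A) (w : V) : ‖w‖ ≤ ‖pairElem u w‖ :=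
  le_trans (le_max_right _ _) (WithCStarModule.max_le_prod_norm (pairElem u w))

lemma myNormPairLe (u : A) (w : V) : ‖pairElem u w‖ ≤ ‖u‖ + ‖w‖ :=
  WithCStarModule.prod_norm_le_norm_add (pairElem u w)

lemma myInnerNormLe (M : V → ℂ → (WithCStarModule Aᵐᵒᵖ (Aᵐᵒᵖ × V) →L[ℂ] WithCStarModule Aᵐᵒᵖ (Aᵐᵒᵖ × V)))
    (hM : IsM M) (x : V) (y : V) : ‖MulOpposite.unop (inner Aᵐᵒᵖ x y)‖ ≤ ‖M x 1‖ * ‖y‖ := by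
  have h1 := hM x 1 (by simp) 0 y
  rw [map_one (starRingEnd ℂ), one_smul, one_smul, myOpSmulZero] at h1
  calc ‖MulOpposite.unop (inner Aᵐᵒᵖ x y)‖ ≤ ‖pairElem (MulOpposite.unop (inner Aᵐᵒᵖ x y)) (0 : V)‖ := myNormFstLe _ _
    _ = ‖M x 1 (pairElem 0 y)‖ := by rw [h1]
    _ ≤ ‖M x 1‖ * ‖pairElem (0 : A) y‖ := (M x 1).le_opNorm _
    _ ≤ ‖M x 1‖ * ‖y‖ := by
        refine mul_le_mul_of_nonneg_left ?_ (ContinuousLinearMap.opNorm_nonneg _)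
        simpa using myNormPairLe (0 : A) y

lemma mySmulNormLe (M : V → ℂ → (WithCStarModule Aᵐᵒᵖ (Aᵐᵒᵖ × V) →L[ℂ] WithCStarModule Aᵐᵒᵖ (Aᵐᵒᵖ × V)))
    (hM : IsM M) (x : V) (d : A) : ‖x <• d‖ ≤ ‖M x 1‖ * ‖d‖ := by
  have h1 := hM x 1 (by simp) d 0
  rw [map_one (starRingEnd ℂ), one_smul, one_smul, CStarModule.inner_zero_right, MulOpposite.unop_zero] at h1
  calc ‖x <• d‖ ≤ ‖pairElem (0 : A) (x <• d)‖ := myNormSndLe _ _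
    _ = ‖M x 1 (pairElem d 0)‖ := by rw [h1]
    _ ≤ ‖M x 1‖ * ‖pairElem d (0 : V)‖ := (M x 1).le_opNorm _
    _ ≤ ‖M x 1‖ * ‖d‖ := by
        refine mul_le_mul_of_nonneg_left ?_ (ContinuousLinearMap.opNorm_nonneg _)
        simpa using myNormPairLe d (0 : V)

theorem stmt10 (M : V → ℂ → (WithCStarModule Aᵐᵒᵖ (Aᵐᵒᵖ × V) →L[ℂ] WithCStarModule Aᵐᵒᵖ (Aᵐᵒᵖ × V))) (hM : IsM M) (a : A) (x : V)
    (h : x <• a = x <• star a) :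
    numRadius M (x <• a) ≤ ‖a + star a‖ * numRadius M x := by
  have hbdd : BddAbove ((fun lam : ℂ => ‖M x lam‖) '' {lam : ℂ | ‖lam‖ = 1}) := by
    refine ⟨2 * ‖x‖, ?_⟩
    rintro - ⟨μ, hμ, rfl⟩
    refine (M x μ).opNorm_le_bound (by positivity) fun ξ => ?_
    have h1 := hM x μ hμ ξ.1.unop ξ.2
    rw [myPairElemEta] at h1
    rw [h1]
    calc ‖pairElem ((starRingEnd ℂ) μ • MulOpposite.unop (inner Aᵐᵒᵖ x ξ.2)) (μ • (x <• ξ.1.unop))‖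
        ≤ ‖(starRingEnd ℂ) μ • MulOpposite.unop (inner Aᵐᵒᵖ x ξ.2)‖ + ‖μ • (x <• ξ.1.unop)‖ := myNormPairLe _ _
      _ = ‖MulOpposite.unop (inner Aᵐᵒᵖ x ξ.2)‖ + ‖x <• ξ.1.unop‖ := by
          rw [norm_smul, myNormSmulV (A := A), RCLike.norm_conj, hμ, one_mul, one_mul]
      _ ≤ ‖x‖ * ‖ξ.2‖ + ‖x‖ * ‖ξ.1.unop‖ :=
          add_le_add (CStarModule.norm_inner_le V (A := Aᵐᵒᵖ) (x := x) (y := ξ.2)) (myNormOpSmulLe x ξ.1.unop)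
      _ ≤ ‖x‖ * ‖ξ‖ + ‖x‖ * ‖ξ‖ := by
          have h2 := WithCStarModule.max_le_prod_norm ξ
          gcongr
          · exact le_trans (le_max_right _ _) h2
          · exact le_trans (le_max_left _ _) h2
      _ = 2 * ‖x‖ * ‖ξ‖ := by ring
  set s : ℝ := sSup ((fun lam : ℂ => ‖M x lam‖) '' {lam : ℂ | ‖lam‖ = 1}) with hs
  have hsnn : 0 ≤ s := Real.sSup_nonneg (by rintro - ⟨μ, hμ, rfl⟩; exact ContinuousLinearMap.opNorm_nonneg _)
  have hx1s : ‖M x 1‖ ≤ s := le_csSup hbdd ⟨1, show ‖(1 : ℂ)‖ = 1 by norm_num, rfl⟩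
  -- key bound
  have key : ∀ lam : ℂ, ‖lam‖ = 1 → ‖M (x <• a) lam‖ ≤ ‖a + star a‖ * ‖M x 1‖ := by
    intro lam hlam
    refine (M (x <• a) lam).opNorm_le_bound (by positivity) fun ξ => ?_
    have h1 := hM (x <• a) lam hlam ξ.1.unop ξ.2
    rw [myPairElemEta] at h1
    rw [h1]
    have ht1 : ‖MulOpposite.unop (inner Aᵐᵒᵖ (x <• a) ξ.2)‖ ≤ 1/2 * (‖a + star a‖ * (‖M x 1‖ * ‖ξ.2‖)) := by
      have e1 : MulOpposite.unop (inner Aᵐᵒᵖ (x <• a) ξ.2) + MulOpposite.unop (inner Aᵐᵒᵖ (x <• a) ξ.2) = (star a + a) * MulOpposite.unop (inner Aᵐᵒᵖ x ξ.2) := by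
        nth_rewrite 2 [h]
        simp only [CStarModule.inner_op_smul_left, MulOpposite.unop_mul, MulOpposite.unop_star,
          MulOpposite.unop_op, star_star, add_mul]
      have e2 : (2 : ℝ) * ‖MulOpposite.unop (inner Aᵐᵒᵖ (x <• a) ξ.2)‖ ≤ ‖a + star a‖ * (‖M x 1‖ * ‖ξ.2‖) := by
        calc (2 : ℝ) * ‖MulOpposite.unop (inner Aᵐᵒᵖ (x <• a) ξ.2)‖ = ‖MulOpposite.unop (inner Aᵐᵒᵖ (x <• a) ξ.2) + MulOpposite.unop (inner Aᵐᵒᵖ (x <• a) ξ.2)‖ := by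
              rw [← two_smul ℂ, norm_smul]; norm_num
          _ = ‖(star a + a) * MulOpposite.unop (inner Aᵐᵒᵖ x ξ.2)‖ := by rw [e1]
          _ ≤ ‖star a + a‖ * ‖MulOpposite.unop (inner Aᵐᵒᵖ x ξ.2)‖ := norm_mul_le _ _
          _ ≤ ‖a + star a‖ * (‖M x 1‖ * ‖ξ.2‖) := by
              rw [add_comm (star a) a]
              exact mul_le_mul_of_nonneg_left (myInnerNormLe M hM x ξ.2) (norm_nonneg (a + star a))
      linarith
    have ht2 : ‖(x <• a) <• ξ.1.unop‖ ≤ 1/2 * (‖a + star a‖ * (‖M x 1‖ * ‖ξ.1.unop‖)) := by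
      have e1 : (x <• a) <• ξ.1.unop + (x <• a) <• ξ.1.unop = x <• ((a + star a) * ξ.1.unop) := by
        nth_rewrite 2 [h]
        rw [myOpSmulOpSmul, myOpSmulOpSmul, add_mul, myOpSmulAdd]
      have e2 : (2 : ℝ) * ‖(x <• a) <• ξ.1.unop‖ ≤ ‖a + star a‖ * (‖M x 1‖ * ‖ξ.1.unop‖) := by
        calc (2 : ℝ) * ‖(x <• a) <• ξ.1.unop‖ = ‖(x <• a) <• ξ.1.unop + (x <• a) <• ξ.1.unop‖ := by
              rw [← two_smul ℂ, myNormSmulV (A := A)]; norm_num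
          _ = ‖x <• ((a + star a) * ξ.1.unop)‖ := by rw [e1]
          _ ≤ ‖M x 1‖ * ‖(a + star a) * ξ.1.unop‖ := mySmulNormLe M hM x _
          _ ≤ ‖M x 1‖ * (‖a + star a‖ * ‖ξ.1.unop‖) :=
              mul_le_mul_of_nonneg_left (norm_mul_le _ _) (ContinuousLinearMap.opNorm_nonneg _)
          _ = ‖a + star a‖ * (‖M x 1‖ * ‖ξ.1.unop‖) := by ring
      linarith
    calc ‖pairElem ((starRingEnd ℂ) lam • MulOpposite.unop (inner Aᵐᵒᵖ (x <• a) ξ.2)) (lam • ((x <• a) <• ξ.1.unop))‖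
        ≤ ‖(starRingEnd ℂ) lam • MulOpposite.unop (inner Aᵐᵒᵖ (x <• a) ξ.2)‖ + ‖lam • ((x <• a) <• ξ.1.unop)‖ :=
          myNormPairLe _ _
      _ = ‖MulOpposite.unop (inner Aᵐᵒᵖ (x <• a) ξ.2)‖ + ‖(x <• a) <• ξ.1.unop‖ := by
          rw [norm_smul, myNormSmulV (A := A), RCLike.norm_conj, hlam, one_mul, one_mul]
      _ ≤ 1/2 * (‖a + star a‖ * (‖M x 1‖ * ‖ξ.2‖)) + 1/2 * (‖a + star a‖ * (‖M x 1‖ * ‖ξ.1.unop‖)) :=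
          add_le_add ht1 ht2
      _ ≤ 1/2 * (‖a + star a‖ * (‖M x 1‖ * ‖ξ‖)) + 1/2 * (‖a + star a‖ * (‖M x 1‖ * ‖ξ‖)) := by
          have h2 := WithCStarModule.max_le_prod_norm ξ
          gcongr
          · exact le_trans (le_max_right _ _) h2
          · exact le_trans (le_max_left _ _) h2
      _ = ‖a + star a‖ * ‖M x 1‖ * ‖ξ‖ := by ring
  -- conclude
  have hsup : sSup ((fun lam : ℂ => ‖M (x <• a) lam‖) '' {lam : ℂ | ‖lam‖ = 1})
      ≤ ‖a + star a‖ * s := by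
    refine Real.sSup_le ?_ (by positivity)
    rintro - ⟨lam, hlam, rfl⟩
    exact le_trans (key lam hlam)
      (mul_le_mul_of_nonneg_left hx1s (norm_nonneg _))
  unfold numRadius
  rw [← hs]
  nlinarith [hsup, Real.sSup_nonneg (s := (fun lam : ℂ => ‖M (x <• a) lam‖) '' {lam : ℂ | ‖lam‖ = 1}) (by rintro - ⟨μ, hμ, rfl⟩; exact ContinuousLinearMap.opNorm_nonneg _)]
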